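/- arXiv:0910.3654 — 2 statements merged into one kernel-verified Lean document; each statement's English description precedes it below -/
import Mathlib

section
/- Let N ≥ 2 and let V₁, …, Vₙ (n ≥ 2) be pairwise disjoint nonempty subsets of the cyclic group ℤ/N (the vertex set of a cycle of length N) such that for all i ≠ j, the set V_j is contained in a single 'cyclic interval' component of (ℤ/N) \ V_i (i.e., a maximal set of consecutive elements of ℤ/N avoiding V_i). Then there exists an index s such that the union ⋃_{j ≠ s} V_j is contained in a single cyclic interval component of (ℤ/N) \ V_s. -/
/-- `S` is contained in a single cyclic-interval component of the complement of `V`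
in the cycle `ℤ/N`: there is a run of cyclically consecutive elements avoiding `V`
which contains `S`. -/
def InOneComponent (N : ℕ) (V S : Set (ZMod N)) : Prop :=
  ∃ (a : ZMod N) (k : ℕ),
    (∀ i ≤ k, (a + (i : ZMod N)) ∉ V) ∧
    S ⊆ {x : ZMod N | ∃ i ≤ k, x = a + (i : ZMod N)}



namespace Stmt13Aux

variable {N : ℕ}

lemma cast_val_eq [NeZero N] (x : ZMod N) : ((x.val : ℕ) : ZMod N) = x := by
  simp [ZMod.natCast_val, ZMod.cast_id]

lemma exists_rep [NeZero N] (a x : ZMod N) : ∃ i : ℕ, i ≤ N - 1 ∧ x = a + (i : ZMod N) := by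
  refine ⟨(x - a).val, ?_, ?_⟩
  · have := ZMod.val_lt (x - a); omega
  · rw [cast_val_eq]; ring

lemma run_inj [NeZero N] {a : ZMod N} {i j : ℕ} (hi : i < N) (hj : j < N)
    (h : a + (i : ZMod N) = a + (j : ZMod N)) : i = j := by
  have h' : (i : ZMod N) = j := add_left_cancel h
  calc i = ((i : ZMod N)).val := (ZMod.val_cast_of_lt hi).symm
  _ = ((j : ZMod N)).val := by rw [h']
  _ = j := ZMod.val_cast_of_lt hj

lemma avoid_bound [NeZero N] {V : Set (ZMod N)} (hV : V.Nonempty) {a : ZMod N} {k : ℕ}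
    (hav : ∀ i ≤ k, a + (i : ZMod N) ∉ V) : k ≤ N - 2 := by
  by_contra h
  obtain ⟨v, hv⟩ := hV
  obtain ⟨i, hi, rfl⟩ := exists_rep a v
  exact hav i (by omega) hv

lemma extend [NeZero N] {V : Set (ZMod N)} (hV : V.Nonempty) {a : ZMod N} {k : ℕ}
    (hav : ∀ i ≤ k, a + (i : ZMod N) ∉ V) :
    ∃ (a' : ZMod N) (k' : ℕ), k ≤ k' ∧ (∀ i ≤ k', a' + (i : ZMod N) ∉ V) ∧
      a' - 1 ∈ V ∧ a' + ((k' + 1 : ℕ) : ZMod N) ∈ V ∧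
      ∀ i ≤ k, ∃ i' ≤ k', a + (i : ZMod N) = a' + (i' : ZMod N) := by
  classical
  obtain ⟨v, hv⟩ := hV
  have hR : ∃ d : ℕ, a + ((k + 1 + d : ℕ) : ZMod N) ∈ V := by
    obtain ⟨i, hi, hvi⟩ := exists_rep a v
    have hik : k + 1 ≤ i := by
      by_contra h
      exact hav i (by omega) (hvi ▸ hv)
    refine ⟨i - (k + 1), ?_⟩
    rw [show k + 1 + (i - (k + 1)) = i from by omega]
    exact hvi ▸ hv
  have hL : ∃ d : ℕ, a - ((d + 1 : ℕ) : ZMod N) ∈ V := by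
    obtain ⟨i, hi, hvi⟩ := exists_rep v a
    have hi0 : i ≠ 0 := by
      rintro rfl
      simp only [Nat.cast_zero, add_zero] at hvi
      exact hav 0 (Nat.zero_le _) (by simpa [← hvi] using hv)
    refine ⟨i - 1, ?_⟩
    rw [show (i - 1 + 1) = i from by omega, hvi]
    simpa using hv
  set R := Nat.find hR with hRdef
  set L := Nat.find hL with hLdef
  refine ⟨a - ((L : ℕ) : ZMod N), L + k + R, by omega, ?_, ?_, ?_, ?_⟩
  · intro i hi
    rcases lt_or_ge i L with h1 | h1
    · have heq : a - ((L : ℕ) : ZMod N) + (i : ZMod N) = a - (((L - i : ℕ)) : ZMod N) := by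
        have h2 : ((L : ℕ) : ZMod N) = ((L - i : ℕ) : ZMod N) + (i : ZMod N) := by
          rw [← Nat.cast_add]; congr 1; omega
        rw [h2]; ring
      rw [heq, show (L - i) = (L - 1 - i) + 1 from by omega]
      exact Nat.find_min hL (show L - 1 - i < L from by omega)
    · have heq : a - ((L : ℕ) : ZMod N) + (i : ZMod N) = a + ((i - L : ℕ) : ZMod N) := by
        have h2 : (i : ZMod N) = ((i - L : ℕ) : ZMod N) + ((L : ℕ) : ZMod N) := by
          rw [← Nat.cast_add]; congr 1; omega
        rw [h2]; ring
      rw [heq]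
      rcases le_or_gt (i - L) k with h2 | h2
      · exact hav _ h2
      · rw [show i - L = k + 1 + (i - L - k - 1) from by omega]
        exact Nat.find_min hR (show i - L - k - 1 < R from by omega)
  · have heq : a - ((L : ℕ) : ZMod N) - 1 = a - (((L + 1 : ℕ)) : ZMod N) := by
      push_cast; ring
    rw [heq]; exact Nat.find_spec hL
  · have heq : a - ((L : ℕ) : ZMod N) + ((L + k + R + 1 : ℕ) : ZMod N)
      = a + ((k + 1 + R : ℕ) : ZMod N) := by push_cast; ring
    rw [heq]; exact Nat.find_spec hR
  · intro i hi
    exact ⟨L + i, by omega, by push_cast; ring⟩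

lemma absorb [NeZero N] {V : Set (ZMod N)} {a b : ZMod N} {k m : ℕ}
    (hl : a - 1 ∈ V) (hr : a + ((k + 1 : ℕ) : ZMod N) ∈ V)
    (hav' : ∀ i ≤ m, b + (i : ZMod N) ∉ V)
    {i i' : ℕ} (hik : i ≤ k) (him : i' ≤ m)
    (hx : a + (i : ZMod N) = b + (i' : ZMod N)) :
    ∀ l ≤ m, ∃ c ≤ k, b + (l : ZMod N) = a + (c : ZMod N) := by
  have fwd : ∀ d, i' + d ≤ m → ∃ c ≤ k, b + ((i' + d : ℕ) : ZMod N) = a + (c : ZMod N) := by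
    intro d
    induction d with
    | zero => intro _; exact ⟨i, hik, by simpa using hx.symm⟩
    | succ d ih =>
      intro hd
      obtain ⟨c, hc, hbc⟩ := ih (by omega)
      have hck : c < k := by
        by_contra h
        have hc' : c = k := by omega
        apply hav' (i' + (d + 1)) hd
        have heq : b + ((i' + (d + 1) : ℕ) : ZMod N) = a + ((k + 1 : ℕ) : ZMod N) := by
          subst hc'; push_cast at hbc ⊢; linear_combination hbc
        rw [heq]; exact hr
      refine ⟨c + 1, by omega, ?_⟩
      push_cast at hbc ⊢; linear_combination hbc
  have bwd : ∀ d, d ≤ i' → ∃ c ≤ k, b + ((i' - d : ℕ) : ZMod N) = a + (c : ZMod N) := by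
    intro d
    induction d with
    | zero => intro _; exact ⟨i, hik, by simpa using hx.symm⟩
    | succ d ih =>
      intro hd
      obtain ⟨c, hc, hbc⟩ := ih (by omega)
      have h1 : ((i' - d : ℕ) : ZMod N) = ((i' - (d + 1) : ℕ) : ZMod N) + 1 := by
        rw [show (i' - d) = (i' - (d + 1)) + 1 from by omega]; push_cast; ring
      have hc0 : c ≠ 0 := by
        rintro rfl
        apply hav' (i' - (d + 1)) (by omega)
        have heq : b + ((i' - (d + 1) : ℕ) : ZMod N) = a - 1 := by
          rw [h1] at hbc
          simp only [Nat.cast_zero, add_zero] at hbc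
          linear_combination hbc
        rw [heq]; exact hl
      refine ⟨c - 1, by omega, ?_⟩
      have h2 : ((c : ℕ) : ZMod N) = ((c - 1 : ℕ) : ZMod N) + 1 := by
        rw [show c = (c - 1) + 1 from by omega]; push_cast; ring
      rw [h1, h2] at hbc
      linear_combination hbc
  intro l hl'
  rcases le_or_gt i' l with h | h
  · obtain ⟨c, hc, hbc⟩ := fwd (l - i') (by omega)
    rw [show i' + (l - i') = l from by omega] at hbc
    exact ⟨c, hc, hbc⟩
  · obtain ⟨c, hc, hbc⟩ := bwd (i' - l) (by omega)
    rw [show i' - (i' - l) = l from by omega] at hbc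
    exact ⟨c, hc, hbc⟩

lemma cover [NeZero N] {b : ZMod N} {m : ℕ} (x : ZMod N) (hm : m ≤ N - 2) :
    (∃ i ≤ m, x = b + (i : ZMod N)) ∨ (∃ i ≤ N - 2 - m, x = b + ((m + 1 + i : ℕ) : ZMod N)) := by
  obtain ⟨i, hi, rfl⟩ := exists_rep b x
  rcases le_or_gt i m with h | h
  · exact Or.inl ⟨i, h, rfl⟩
  · refine Or.inr ⟨i - (m + 1), by omega, ?_⟩
    rw [show m + 1 + (i - (m + 1)) = i from by omega]

lemma excl [NeZero N] (hN2 : 2 ≤ N) {b : ZMod N} {m : ℕ} (hm : m ≤ N - 2) {i i' : ℕ}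
    (hi : i ≤ m) (hi' : i' ≤ N - 2 - m)
    (h : b + (i : ZMod N) = b + ((m + 1 + i' : ℕ) : ZMod N)) : False := by
  have := run_inj (N := N) (show i < N from by omega) (show m + 1 + i' < N from by omega) h
  omega

def runF (a : ZMod N) (k : ℕ) : Finset (ZMod N) :=
  (Finset.range (k + 1)).image (fun i : ℕ => a + (i : ZMod N))

lemma mem_runF {a x : ZMod N} {k : ℕ} : x ∈ runF a k ↔ ∃ i ≤ k, x = a + (i : ZMod N) := by
  simp only [runF, Finset.mem_image, Finset.mem_range, Nat.lt_succ_iff]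
  constructor
  · rintro ⟨i, hi, rfl⟩; exact ⟨i, hi, rfl⟩
  · rintro ⟨i, hi, rfl⟩; exact ⟨i, hi, rfl⟩

lemma card_runF [NeZero N] {a : ZMod N} {k : ℕ} (hk : k < N) : (runF a k).card = k + 1 := by
  rw [runF, Finset.card_image_of_injOn, Finset.card_range]
  intro i hi j hj h
  simp only [Finset.coe_range, Set.mem_Iio] at hi hj
  exact run_inj (by omega) (by omega) h

end Stmt13Aux

open Stmt13Aux in
theorem stmt13 (N : ℕ) (hN : 2 ≤ N) (n : ℕ) (hn : 2 ≤ n)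
    (V : Fin n → Set (ZMod N))
    (hne : ∀ i, (V i).Nonempty)
    (hdisj : ∀ i j, i ≠ j → Disjoint (V i) (V j))
    (hnoncross : ∀ i j, i ≠ j → InOneComponent N (V i) (V j)) :
    ∃ s : Fin n, InOneComponent N (V s) (⋃ j ∈ {j : Fin n | j ≠ s}, V j) := by
  classical
  haveI : NeZero N := ⟨by omega⟩
  set P : ℕ → Prop := fun k => ∃ (s t : Fin n) (a : ZMod N), s ≠ t ∧
      (∀ i ≤ k, a + (i : ZMod N) ∉ V s) ∧ a - 1 ∈ V s ∧ a + ((k + 1 : ℕ) : ZMod N) ∈ V s ∧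
      (∀ x ∈ V t, ∃ i ≤ k, x = a + (i : ZMod N)) with hPdef
  have hbound : ∀ k, P k → k ≤ N - 2 := by
    rintro k ⟨s, t, a, _, hav, _, _, _⟩
    exact avoid_bound (hne s) hav
  have hex : ∃ k, P k := by
    have h01 : (⟨0, by omega⟩ : Fin n) ≠ ⟨1, by omega⟩ := by simp [Fin.ext_iff]
    obtain ⟨a, k, hav, hsub⟩ := hnoncross _ _ h01
    obtain ⟨a', k', hkk, hav', hl, hr, hcon⟩ := extend (hne _) hav
    refine ⟨k', ⟨0, by omega⟩, ⟨1, by omega⟩, a', h01, hav', hl, hr, ?_⟩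
    intro x hx
    obtain ⟨i, hik, hxi⟩ := hsub hx
    obtain ⟨i', hi', he⟩ := hcon i hik
    exact ⟨i', hi', by rw [hxi, he]⟩
  obtain ⟨k0, hk0⟩ := hex
  set K := Nat.findGreatest P (N - 2) with hKdef
  have hKP : P K := Nat.findGreatest_spec (hbound _ hk0) hk0
  have hKmax : ∀ k', P k' → k' ≤ K := fun k' h' => Nat.le_findGreatest (hbound _ h') h'
  obtain ⟨s, t, a, hst, hav, hl, hr, hsub⟩ := hKP
  have hK2 : K ≤ N - 2 := avoid_bound (hne s) hav
  refine ⟨s, a, K, hav, ?_⟩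
  intro x hx
  simp only [Set.mem_iUnion, Set.mem_setOf_eq, exists_prop] at hx
  obtain ⟨j, hjs, hxj⟩ := hx
  by_contra hxR
  obtain ⟨b, m, hav', hsub'⟩ := hnoncross s j (Ne.symm hjs)
  have hm : m ≤ N - 2 := avoid_bound (hne s) hav'
  have hdisjRR' : ∀ c ≤ K, ∀ c' ≤ m, a + (c : ZMod N) ≠ b + (c' : ZMod N) := by
    intro c hc c' hc' hEq
    have habs := absorb hl hr hav' hc hc' hEq
    obtain ⟨i, him, hxi⟩ := hsub' hxj
    obtain ⟨cc, hcc, hbc⟩ := habs i him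
    exact hxR ⟨cc, hcc, by rw [hxi, hbc]⟩
  obtain ⟨v, hv⟩ := hne s
  -- the complement arc C of run(b,m) avoids V j
  have hCav : ∀ i ≤ N - 2 - m, (b + ((m + 1 : ℕ) : ZMod N)) + ((i : ℕ) : ZMod N) ∉ V j := by
    intro i hi hmem
    obtain ⟨i', hi', he⟩ := hsub' hmem
    refine excl hN hm hi' hi (N := N) (b := b) ?_
    rw [← he]
    push_cast; ring
  obtain ⟨a2, k2, hk2ge, hav2, hl2, hr2, hcon2⟩ := extend (hne j) hCav
  -- V s is contained in run(a2, k2), so P k2 holds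
  have hPk2 : P k2 := by
    refine ⟨j, s, a2, hjs, hav2, hl2, hr2, ?_⟩
    intro y hy
    rcases cover (b := b) y hm with ⟨i, hi, hyi⟩ | ⟨i, hi, hyi⟩
    · exact absurd (hyi ▸ hy) (hav' i hi)
    · obtain ⟨i', hi', he⟩ := hcon2 i hi
      refine ⟨i', hi', ?_⟩
      rw [hyi, ← he]; push_cast; ring
  have hKge : N - 2 - m ≤ K := le_trans hk2ge (hKmax _ hPk2)
  -- cardinality: insert v (runF a K) ⊆ runF (b + (m+1)) (N - 2 - m)
  have hsubF : insert v (runF a K) ⊆ runF (b + ((m + 1 : ℕ) : ZMod N)) (N - 2 - m) := by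
    intro y hy
    rw [Finset.mem_insert, mem_runF] at hy
    rw [mem_runF]
    have hyC : ∀ i ≤ m, y ≠ b + (i : ZMod N) := by
      rcases hy with rfl | ⟨c, hc, rfl⟩
      · intro i hi hEq; exact hav' i hi (hEq ▸ hv)
      · intro i hi hEq; exact hdisjRR' c hc i hi hEq
    rcases cover (b := b) y hm with ⟨i, hi, hyi⟩ | ⟨i, hi, hyi⟩
    · exact absurd hyi (hyC i hi)
    · exact ⟨i, hi, by rw [hyi]; push_cast; ring⟩
  have hvR : v ∉ runF a K := by
    rw [mem_runF]
    rintro ⟨c, hc, hvc⟩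
    exact hav c hc (hvc ▸ hv)
  have hcard1 : (insert v (runF a K)).card = K + 2 := by
    rw [Finset.card_insert_of_notMem hvR, card_runF (by omega)]
  have hcard2 : (runF (b + ((m + 1 : ℕ) : ZMod N)) (N - 2 - m)).card = N - 2 - m + 1 :=
    card_runF (by omega)
  have := Finset.card_le_card hsubF
  omega
end

section
/- Let N ≥ 2 and let V₁, …, Vₙ (n ≥ 2) be pairwise disjoint nonempty subsets of ℤ/N, pairwise non-crossing in the sense that for all i ≠ j, V_j lies in a single cyclic interval component of (ℤ/N) \ V_i. For each i let ν(i) be the maximal cardinality of a subset M ⊆ {1,…,n} \ {i} such that ⋃_{j ∈ M} V_j lies in a single cyclic interval component of (ℤ/N) \ V_i. If ν(i) < n − 1 for some i, then there exists i' ≠ i with ν(i') ≥ ν(i) + 1. -/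
/-- Adding two natural casts to a point. -/
lemma pt_eq {N : ℕ} (v : ZMod N) (p q : ℕ) :
    v + (p : ZMod N) + (q : ZMod N) = v + ((p + q : ℕ) : ZMod N) := by
  push_cast; ring

lemma vadd_inj {N : ℕ} [NeZero N] {v : ZMod N} {u1 u2 : ℕ}
    (h1 : u1 < N) (h2 : u2 < N) (h : v + (u1 : ZMod N) = v + (u2 : ZMod N)) : u1 = u2 := by
  have h' := add_left_cancel h
  have := congrArg ZMod.val h'
  rwa [ZMod.val_cast_of_lt h1, ZMod.val_cast_of_lt h2] at this

lemma cast_sub_N {N u : ℕ} (h : N ≤ u) : ((u : ℕ) : ZMod N) = ((u - N : ℕ) : ZMod N) := by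
  conv_lhs => rw [show u = (u - N) + N by omega]
  push_cast
  simp

/-- Unrolling the circle at a point `v ∈ W`: an interval avoiding `W` cannot wrap past `v`,
so its base point is `v + s` for some `1 ≤ s` with `s + k < N`. -/
lemma unroll {N : ℕ} [NeZero N] (W : Set (ZMod N)) {v : ZMod N} (hv : v ∈ W)
    (a : ZMod N) (k : ℕ) (havoid : ∀ t ≤ k, a + (t : ZMod N) ∉ W) :
    ∃ s : ℕ, 1 ≤ s ∧ s + k < N ∧ a = v + (s : ZMod N) := by
  have ha : a = v + (((a - v).val : ℕ) : ZMod N) := by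
    simp [ZMod.natCast_val, ZMod.cast_id]
  refine ⟨(a - v).val, ?_, ?_, ha⟩
  · rcases Nat.eq_zero_or_pos (a - v).val with h0 | h
    · exfalso
      apply havoid 0 (Nat.zero_le k)
      rw [h0] at ha
      simp only [Nat.cast_zero, add_zero] at ha ⊢
      rw [ha]; exact hv
    · exact h
  · have key : ∀ t, t ≤ k → (a - v).val + t < N := by
      intro t
      induction t with
      | zero => intro _; simpa using ZMod.val_lt (a - v)
      | succ t ih =>
        intro htk
        have h1 : (a - v).val + t < N := ih (Nat.le_of_succ_le htk)
        by_contra hcon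
        have heq : (a - v).val + (t + 1) = N := by omega
        apply havoid (t + 1) htk
        have : a + ((t + 1 : ℕ) : ZMod N) = v := by
          rw [ha]
          rw [add_assoc, ← Nat.cast_add, heq]
          simp
        rw [this]
        exact hv
    exact key k le_rfl

/-- Points outside an unrolled interval `[s2, s2+k2]` lie in the complementary cyclic
interval based at `a2 + (k2+1)` of length `N - k2 - 2`. -/
lemma compl_mem {N : ℕ} [NeZero N] {v a2 : ZMod N} {s2 k2 : ℕ}
    (ha2 : a2 = v + (s2 : ZMod N)) (hs2 : 1 ≤ s2) (hs2k : s2 + k2 < N)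
    {u0 : ℕ} (hu0 : u0 < N) (hout : u0 < s2 ∨ s2 + k2 < u0) :
    ∃ t ≤ N - k2 - 2, v + (u0 : ZMod N) = a2 + ((k2 + 1 : ℕ) : ZMod N) + (t : ZMod N) := by
  rcases hout with h | h
  · refine ⟨u0 + N - s2 - k2 - 1, by omega, ?_⟩
    rw [ha2, pt_eq, pt_eq,
      show s2 + (k2 + 1 + (u0 + N - s2 - k2 - 1)) = u0 + N by omega,
      cast_sub_N (show N ≤ u0 + N by omega), show u0 + N - N = u0 by omega]
  · refine ⟨u0 - s2 - k2 - 1, by omega, ?_⟩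
    rw [ha2, pt_eq, pt_eq,
      show s2 + (k2 + 1 + (u0 - s2 - k2 - 1)) = u0 by omega]

theorem stmt14 (N : ℕ) (hN : 2 ≤ N) (n : ℕ) (hn : 2 ≤ n)
    (V : Fin n → Set (ZMod N))
    (hne : ∀ i, (V i).Nonempty)
    (hdisj : ∀ i j, i ≠ j → Disjoint (V i) (V j))
    (hnoncross : ∀ i j, i ≠ j → InOneComponent N (V i) (V j))
    (ν : Fin n → ℕ)
    (hν : ∀ i : Fin n, IsGreatest
      {m : ℕ | ∃ M : Finset (Fin n), i ∉ M ∧ M.card = m ∧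
        InOneComponent N (V i) (⋃ j ∈ M, V j)} (ν i))
    (i : Fin n) (hi : ν i < n - 1) :
    ∃ i' : Fin n, i' ≠ i ∧ ν i + 1 ≤ ν i' := by
  haveI : NeZero N := ⟨by omega⟩
  obtain ⟨M, hiM, hMcard, hIOC⟩ := (hν i).1
  obtain ⟨a1, k1, h1a, h1s⟩ := hIOC
  obtain ⟨v, hv⟩ := hne i
  have hcard : (insert i M).card < n := by
    rw [Finset.card_insert_of_notMem hiM, hMcard]; omega
  obtain ⟨j, hj⟩ : ∃ j, j ∉ insert i M := by
    by_contra h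
    push_neg at h
    have he : insert i M = Finset.univ := Finset.eq_univ_iff_forall.2 h
    rw [he, Finset.card_univ, Fintype.card_fin] at hcard
    omega
  have hji : j ≠ i := fun h => hj (h ▸ Finset.mem_insert_self i M)
  have hjM : j ∉ M := fun h => hj (Finset.mem_insert_of_mem h)
  obtain ⟨a2, k2, h2a, h2s⟩ := hnoncross i j (Ne.symm hji)
  obtain ⟨s1, hs1, hs1k, ha1⟩ := unroll (V i) hv a1 k1 h1a
  obtain ⟨s2, hs2, hs2k, ha2⟩ := unroll (V i) hv a2 k2 h2a
  have h1s' : ∀ x ∈ ⋃ j' ∈ M, V j', ∃ u, s1 ≤ u ∧ u ≤ s1 + k1 ∧ x = v + (u : ZMod N) := by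
    intro x hx
    obtain ⟨t, ht, hxt⟩ := h1s hx
    exact ⟨s1 + t, by omega, by omega, by rw [hxt, ha1, pt_eq]⟩
  have h2s' : ∀ x ∈ V j, ∃ u, s2 ≤ u ∧ u ≤ s2 + k2 ∧ x = v + (u : ZMod N) := by
    intro x hx
    obtain ⟨t, ht, hxt⟩ := h2s hx
    exact ⟨s2 + t, by omega, by omega, by rw [hxt, ha2, pt_eq]⟩
  by_cases hsep : s1 + k1 < s2 ∨ s2 + k2 < s1
  · -- the two unrolled intervals are disjoint: `insert i M` works for `j`
    refine ⟨j, hji, ?_⟩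
    have hmem : ∃ M' : Finset (Fin n), j ∉ M' ∧ M'.card = ν i + 1 ∧
        InOneComponent N (V j) (⋃ j'' ∈ M', V j'') := by
      refine ⟨insert i M, hj, ?_, a2 + ((k2 + 1 : ℕ) : ZMod N), N - k2 - 2, ?_, ?_⟩
      · rw [Finset.card_insert_of_notMem hiM, hMcard]
      · intro t ht hcon
        obtain ⟨u2, hu2a, hu2b, hx⟩ := h2s' _ hcon
        have hu2N : u2 < N := by omega
        rw [ha2, pt_eq, pt_eq] at hx
        by_cases hcase : s2 + (k2 + 1 + t) < N
        · have := vadd_inj hcase hu2N hx; omega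
        · rw [cast_sub_N (show N ≤ s2 + (k2 + 1 + t) by omega)] at hx
          have := vadd_inj (show s2 + (k2 + 1 + t) - N < N by omega) hu2N hx
          omega
      · intro x hx
        simp only [Finset.mem_insert, Set.mem_iUnion, exists_prop] at hx
        obtain ⟨u0, hu0N, hout, hxeq⟩ :
            ∃ u0, u0 < N ∧ (u0 < s2 ∨ s2 + k2 < u0) ∧ x = v + (u0 : ZMod N) := by
          obtain ⟨j', hj', hxj'⟩ := hx
          rcases hj' with rfl | hj'M
          · refine ⟨(x - v).val, ZMod.val_lt _, ?_, by simp [ZMod.natCast_val, ZMod.cast_id]⟩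
            by_contra hcon
            push_neg at hcon
            obtain ⟨hl, hr⟩ := hcon
            apply h2a ((x - v).val - s2) (by omega)
            rw [ha2, pt_eq, show s2 + ((x - v).val - s2) = (x - v).val by omega,
              show v + (((x - v).val : ℕ) : ZMod N) = x by simp [ZMod.natCast_val, ZMod.cast_id]]
            exact hxj'
          · obtain ⟨u, hua, hub, hxu⟩ := h1s' x (Set.mem_biUnion hj'M hxj')
            exact ⟨u, by omega, by omega, hxu⟩
        obtain ⟨t, htb, hte⟩ := compl_mem ha2 hs2 hs2k hu0N hout
        exact ⟨t, htb, by rw [hxeq, hte]⟩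
    exact (hν j).2 hmem
  · -- the two unrolled intervals overlap: `insert j M` would be a bigger witness for `i`
    exfalso
    push_neg at hsep
    obtain ⟨h21, h12⟩ := hsep
    have hmem : ∃ M' : Finset (Fin n), i ∉ M' ∧ M'.card = ν i + 1 ∧
        InOneComponent N (V i) (⋃ j'' ∈ M', V j'') := by
      refine ⟨insert j M, ?_, ?_, v + ((min s1 s2 : ℕ) : ZMod N),
        max (s1 + k1) (s2 + k2) - min s1 s2, ?_, ?_⟩
      · simp only [Finset.mem_insert]
        push_neg
        exact ⟨Ne.symm hji, hiM⟩
      · rw [Finset.card_insert_of_notMem hjM, hMcard]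
      · intro t ht
        rw [pt_eq]
        have hcover : (s1 ≤ min s1 s2 + t ∧ min s1 s2 + t ≤ s1 + k1) ∨
            (s2 ≤ min s1 s2 + t ∧ min s1 s2 + t ≤ s2 + k2) := by omega
        rcases hcover with ⟨hl, hr⟩ | ⟨hl, hr⟩
        · rw [show min s1 s2 + t = s1 + (min s1 s2 + t - s1) by omega, ← pt_eq, ← ha1]
          exact h1a (min s1 s2 + t - s1) (by omega)
        · rw [show min s1 s2 + t = s2 + (min s1 s2 + t - s2) by omega, ← pt_eq, ← ha2]
          exact h2a (min s1 s2 + t - s2) (by omega)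
      · intro x hx
        simp only [Finset.mem_insert, Set.mem_iUnion, exists_prop] at hx
        obtain ⟨j', hj', hxj'⟩ := hx
        have hex : ∃ u, (s1 ≤ u ∧ u ≤ s1 + k1 ∨ s2 ≤ u ∧ u ≤ s2 + k2) ∧
            x = v + (u : ZMod N) := by
          rcases hj' with rfl | hj'M
          · obtain ⟨u, ha', hb', hx'⟩ := h2s' x hxj'
            exact ⟨u, Or.inr ⟨ha', hb'⟩, hx'⟩
          · obtain ⟨u, ha', hb', hx'⟩ := h1s' x (Set.mem_biUnion hj'M hxj')
            exact ⟨u, Or.inl ⟨ha', hb'⟩, hx'⟩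
        obtain ⟨u, hrange, hxu⟩ := hex
        refine ⟨u - min s1 s2, by omega, ?_⟩
        rw [pt_eq, show min s1 s2 + (u - min s1 s2) = u by omega]
        exact hxu
    have := (hν i).2 hmem
    omega
end
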